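/- Let k ∈ ℝ and let h : ℝ² → ℝ be C³ on ℝ² \ {0} and positively homogeneous of degree k. Let v ≠ 0 with K₂(h)(v) ≠ 0. Then for every t > 0: J₃(h)(t • v) = t^(−k) · J₃(h)(v), where J₃(h) = K₃(h)²/K₂(h)³. (This is the statement that the radial field δ̂ acts on the invariant J₃ by δ̂(J₃) = −k·J₃.) -/

import Mathlib

open Set

/-- First partial derivative of `h : ℝ² → ℝ` in the `i`-th coordinate direction. -/
noncomputable def pd1 (h : (Fin 2 → ℝ) → ℝ) (i : Fin 2) (x : Fin 2 → ℝ) : ℝ :=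
  fderiv ℝ h x (Pi.single i 1)

/-- Second partial derivative of `h : ℝ² → ℝ`. -/
noncomputable def pd2 (h : (Fin 2 → ℝ) → ℝ) (i j : Fin 2) (x : Fin 2 → ℝ) : ℝ :=
  iteratedFDeriv ℝ 2 h x ![Pi.single i 1, Pi.single j 1]

/-- Third partial derivative of `h : ℝ² → ℝ`. -/
noncomputable def pd3 (h : (Fin 2 → ℝ) → ℝ) (i j m : Fin 2) (x : Fin 2 → ℝ) : ℝ :=
  iteratedFDeriv ℝ 3 h x ![Pi.single i 1, Pi.single j 1, Pi.single m 1]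

/-- `K₂(h) = (1/2)(h₁₁h₂² − 2h₁₂h₁h₂ + h₂₂h₁²)`. -/
noncomputable def K2 (h : (Fin 2 → ℝ) → ℝ) (x : Fin 2 → ℝ) : ℝ :=
  (1 / 2) * (pd2 h 0 0 x * (pd1 h 1 x) ^ 2 - 2 * pd2 h 0 1 x * pd1 h 0 x * pd1 h 1 x +
    pd2 h 1 1 x * (pd1 h 0 x) ^ 2)

/-- `K₃(h) = (1/6)(h₁₁₁h₂³ − 3h₁₁₂h₂²h₁ + 3h₁₂₂h₂h₁² − h₂₂₂h₁³)`. -/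
noncomputable def K3 (h : (Fin 2 → ℝ) → ℝ) (x : Fin 2 → ℝ) : ℝ :=
  (1 / 6) * (pd3 h 0 0 0 x * (pd1 h 1 x) ^ 3 -
    3 * pd3 h 0 0 1 x * (pd1 h 1 x) ^ 2 * pd1 h 0 x +
    3 * pd3 h 0 1 1 x * pd1 h 1 x * (pd1 h 0 x) ^ 2 -
    pd3 h 1 1 1 x * (pd1 h 0 x) ^ 3)

/-- The invariant `J₃(h) = K₃(h)²/K₂(h)³`. -/
noncomputable def J3 (h : (Fin 2 → ℝ) → ℝ) (x : Fin 2 → ℝ) : ℝ :=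
  (K3 h x) ^ 2 / (K2 h x) ^ 3

/-- Scalar multiplication by a nonzero real as a continuous linear equivalence of `ℝ²`. -/
noncomputable def smulCLE (t : ℝ) (ht : t ≠ 0) : (Fin 2 → ℝ) ≃L[ℝ] (Fin 2 → ℝ) :=
  (LinearEquiv.smulOfNeZero ℝ (Fin 2 → ℝ) t ht).toContinuousLinearEquiv

/-- Homogeneity of iterated derivatives of a positively homogeneous function. -/
lemma iteratedFDeriv_homog (k : ℝ) (h : (Fin 2 → ℝ) → ℝ)
    (hf : ContDiffOn ℝ 3 h {x | x ≠ 0})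
    (hhom : ∀ t : ℝ, 0 < t → ∀ x : Fin 2 → ℝ, x ≠ 0 → h (t • x) = t ^ k * h x)
    (v : Fin 2 → ℝ) (hv : v ≠ 0) (t : ℝ) (ht : 0 < t)
    (n : ℕ) (hn : (n : WithTop ℕ∞) ≤ 3) (m : Fin n → (Fin 2 → ℝ)) :
    iteratedFDeriv ℝ n h (t • v) (fun i => t • m i) = t ^ k * iteratedFDeriv ℝ n h v m := by
  set s : Set (Fin 2 → ℝ) := {x | x ≠ 0} with hs
  have hso : IsOpen s := isOpen_compl_singleton
  have hsu : UniqueDiffOn ℝ s := hso.uniqueDiffOn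
  have hvs : v ∈ s := hv
  have htv : t • v ∈ s := by
    simp only [hs, mem_setOf_eq, smul_ne_zero_iff]
    exact ⟨ht.ne', hv⟩
  set g := smulCLE t ht.ne' with hg
  have hpre : (g : (Fin 2 → ℝ) → (Fin 2 → ℝ)) ⁻¹' s = s := by
    ext x
    simp only [mem_preimage, hs, mem_setOf_eq]
    show t • x ≠ 0 ↔ x ≠ 0
    simp [smul_eq_zero, ht.ne']
  have h1 : iteratedFDerivWithin ℝ n (h ∘ g) ((g : (Fin 2 → ℝ) → (Fin 2 → ℝ)) ⁻¹' s) v =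
      (iteratedFDerivWithin ℝ n h s (g v)).compContinuousLinearMap fun _ => g :=
    g.iteratedFDerivWithin_comp_right h hsu htv n
  rw [hpre] at h1
  have heq : EqOn (h ∘ g) ((t ^ k) • h) s := by
    intro x hx
    simp only [Function.comp_apply, Pi.smul_apply, smul_eq_mul]
    exact hhom t ht x hx
  have h2 : iteratedFDerivWithin ℝ n ((t ^ k) • h) s v =
      (iteratedFDerivWithin ℝ n h s (g v)).compContinuousLinearMap fun _ => g := by
    rw [← h1]
    exact (iteratedFDerivWithin_congr heq hvs n).symm
  have h3 : iteratedFDerivWithin ℝ n ((t ^ k) • h) s v m =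
      (t ^ k) • iteratedFDerivWithin ℝ n h s v m :=
    congrFun (congrArg _ (iteratedFDerivWithin_const_smul_apply ((hf.of_le hn) v hvs) hsu hvs)) m
  have h4 := congrFun (congrArg DFunLike.coe h2) m
  rw [h3] at h4
  have h5 : (iteratedFDerivWithin ℝ n h s (g v)).compContinuousLinearMap (fun _ => g) m =
      iteratedFDerivWithin ℝ n h s (t • v) (fun i => t • m i) := rfl
  rw [h5] at h4
  rw [iteratedFDerivWithin_of_isOpen n hso htv, iteratedFDerivWithin_of_isOpen n hso hvs] at h4
  simpa [smul_eq_mul] using h4.symm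

theorem J3_radial_homogeneity (k : ℝ) (h : (Fin 2 → ℝ) → ℝ)
    (hf : ContDiffOn ℝ 3 h {x | x ≠ 0})
    (hhom : ∀ t : ℝ, 0 < t → ∀ x : Fin 2 → ℝ, x ≠ 0 → h (t • x) = t ^ k * h x)
    (v : Fin 2 → ℝ) (hv : v ≠ 0) (hK2 : K2 h v ≠ 0) :
    ∀ t : ℝ, 0 < t → J3 h (t • v) = t ^ (-k) * J3 h v := by
  intro t ht
  have htne : t ≠ 0 := ht.ne'
  have key := iteratedFDeriv_homog k h hf hhom v hv t ht
  -- homogeneity for pd1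
  have e1 : ∀ i, pd1 h i (t • v) = t ^ k / t * pd1 h i v := by
    intro i
    have h0 := key 1 (by norm_num) (fun _ => Pi.single i 1)
    rw [(iteratedFDeriv ℝ 1 h (t • v)).map_smul_univ (fun _ => t) (fun _ => Pi.single i 1)] at h0
    simp only [Finset.prod_const, Finset.card_univ, Fintype.card_fin, pow_one,
      smul_eq_mul] at h0
    have ha : iteratedFDeriv ℝ 1 h (t • v) (fun _ => Pi.single i 1) = pd1 h i (t • v) := by
      rw [iteratedFDeriv_one_apply]; rfl
    have hb : iteratedFDeriv ℝ 1 h v (fun _ => Pi.single i 1) = pd1 h i v := by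
      rw [iteratedFDeriv_one_apply]; rfl
    rw [ha, hb] at h0
    field_simp
    linarith [h0]
  have e2 : ∀ i j, pd2 h i j (t • v) = t ^ k / t ^ 2 * pd2 h i j v := by
    intro i j
    have h0 := key 2 (by norm_num) ![Pi.single i 1, Pi.single j 1]
    have hL : ((iteratedFDeriv ℝ 2 h (t • v)) fun l =>
        t • (![Pi.single i 1, Pi.single j 1] : Fin 2 → (Fin 2 → ℝ)) l) =
        t ^ 2 * pd2 h i j (t • v) := by
      simpa [smul_eq_mul, pd2] using (iteratedFDeriv ℝ 2 h (t • v)).map_smul_univ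
        (fun _ : Fin 2 => t) ![Pi.single i 1, Pi.single j 1]
    rw [hL] at h0
    have h0' : t ^ 2 * pd2 h i j (t • v) = t ^ k * pd2 h i j v := h0
    field_simp
    linarith [h0']
  have e3 : ∀ i j l, pd3 h i j l (t • v) = t ^ k / t ^ 3 * pd3 h i j l v := by
    intro i j l
    have h0 := key 3 (by norm_num) ![Pi.single i 1, Pi.single j 1, Pi.single l 1]
    have hL : ((iteratedFDeriv ℝ 3 h (t • v)) fun r =>
        t • (![Pi.single i 1, Pi.single j 1, Pi.single l 1] : Fin 3 → (Fin 2 → ℝ)) r) =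
        t ^ 3 * pd3 h i j l (t • v) := by
      simpa [smul_eq_mul, pd3] using (iteratedFDeriv ℝ 3 h (t • v)).map_smul_univ
        (fun _ : Fin 3 => t) ![Pi.single i 1, Pi.single j 1, Pi.single l 1]
    rw [hL] at h0
    have h0' : t ^ 3 * pd3 h i j l (t • v) = t ^ k * pd3 h i j l v := h0
    field_simp
    linarith [h0']
  have hc : (0:ℝ) < t ^ k := Real.rpow_pos_of_pos ht k
  have hK2t : K2 h (t • v) = (t ^ k) ^ 3 / t ^ 4 * K2 h v := by
    unfold K2
    rw [e1, e1, e2, e2, e2]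
    field_simp
  have hK3t : K3 h (t • v) = (t ^ k) ^ 4 / t ^ 6 * K3 h v := by
    unfold K3
    rw [e1, e1, e3, e3, e3, e3]
    field_simp
  unfold J3
  rw [hK2t, hK3t, Real.rpow_neg ht.le]
  field_simp
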